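/- The function V(α, β, γ) = Л(α) + Л(β) + Л(γ) is strictly concave on the convex set { (α, β, γ) ∈ ℝ³ : α > 0, β > 0, γ > 0, α + β + γ = π }. -/

import Mathlib

open Real

/-- Milnor's Lobachevsky function. -/
noncomputable def Lob (x : ℝ) : ℝ := -∫ t in (0:ℝ)..x, Real.log |2 * Real.sin t|

open Set MeasureTheory intervalIntegral

lemma neg_log_le {t : ℝ} (ht : 0 < t) : -Real.log t ≤ 2 * t ^ (-(1/2) : ℝ) := by
  have hu : 0 < t ^ (-(1/2) : ℝ) := Real.rpow_pos_of_pos ht _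
  have h1 : Real.log (t ^ (-(1/2) : ℝ)) ≤ t ^ (-(1/2) : ℝ) :=
    (Real.log_le_sub_one_of_pos hu).trans (by linarith)
  rw [Real.log_rpow ht] at h1
  linarith

lemma sin_lower {x t : ℝ} (hx : x ∈ Ioo 0 π) (ht : t ∈ Ioo 0 x) :
    (Real.sin x / x) * t ≤ Real.sin t := by
  have hb0 : (0:ℝ) ≤ t/x := div_nonneg ht.1.le hx.1.le
  have hb1 : t/x < 1 := (div_lt_one hx.1).2 ht.2
  have h := strictConcaveOn_sin_Icc.concaveOn.2 (x := (0:ℝ)) (y := x)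
      ⟨le_refl 0, Real.pi_pos.le⟩ ⟨hx.1.le, hx.2.le⟩
      (show (0:ℝ) ≤ 1 - t/x by linarith) hb0 (by ring)
  have hxne : x ≠ 0 := hx.1.ne'
  simp only [smul_eq_mul, Real.sin_zero, mul_zero, zero_add, add_zero,
    div_mul_cancel₀ _ hxne] at h
  calc (Real.sin x / x) * t = (t/x) * Real.sin x := by field_simp
  _ ≤ Real.sin t := by linarith

lemma integrable_logsin {x : ℝ} (hx : x ∈ Ioo 0 π) :
    IntervalIntegrable (fun t => Real.log |2 * Real.sin t|) volume 0 x := by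
  rw [intervalIntegrable_iff_integrableOn_Ioo_of_le hx.1.le]
  set c : ℝ := Real.sin x / x with hc
  have hsx : 0 < Real.sin x := Real.sin_pos_of_pos_of_lt_pi hx.1 hx.2
  have hcpos : 0 < c := div_pos hsx hx.1
  have hrpow : IntegrableOn (fun t : ℝ => t ^ (-(1/2) : ℝ)) (Ioo 0 x) volume := by
    have := intervalIntegrable_rpow' (a := 0) (b := x) (r := -(1/2)) (by norm_num)
    rwa [intervalIntegrable_iff_integrableOn_Ioo_of_le hx.1.le] at this
  refine Integrable.mono'
      (g := fun t => (|Real.log (2 * x)| + |Real.log (2 * c)|) + 2 * t ^ (-(1/2) : ℝ))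
      ((integrableOn_const measure_Ioo_lt_top.ne).add (hrpow.const_mul 2))
      ((Real.measurable_log.comp ((measurable_sin.const_mul 2).abs)).aestronglyMeasurable.restrict)
      ?_
  filter_upwards [ae_restrict_mem measurableSet_Ioo] with t ht
  have ht0 : 0 < t := ht.1
  have htx : t < x := ht.2
  have hst : 0 < Real.sin t := Real.sin_pos_of_pos_of_lt_pi ht0 (htx.trans hx.2)
  have hup : Real.sin t < t := Real.sin_lt ht0
  have hlow : c * t ≤ Real.sin t := sin_lower hx ht
  have habs : |2 * Real.sin t| = 2 * Real.sin t := abs_of_pos (by linarith)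
  rw [Real.norm_eq_abs, habs, abs_le]
  constructor
  · -- lower bound : -(bound) ≤ log (2 sin t)
    have h1 : Real.log (2 * (c * t)) ≤ Real.log (2 * Real.sin t) :=
      Real.log_le_log (by positivity) (by linarith)
    have h2 : Real.log (2 * (c * t)) = Real.log (2 * c) + Real.log t := by
      rw [show 2 * (c * t) = (2 * c) * t by ring,
        Real.log_mul (by positivity) ht0.ne']
    have h3 : -Real.log t ≤ 2 * t ^ (-(1/2) : ℝ) := neg_log_le ht0
    have h4 : -|Real.log (2*c)| ≤ Real.log (2*c) := neg_abs_le _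
    nlinarith [abs_nonneg (Real.log (2*x))]
  · have h1 : Real.log (2 * Real.sin t) ≤ Real.log (2 * x) :=
      Real.log_le_log (by positivity) (by nlinarith)
    have h2 : Real.log (2*x) ≤ |Real.log (2*x)| := le_abs_self _
    have h3 : 0 < t ^ (-(1/2) : ℝ) := Real.rpow_pos_of_pos ht0 _
    nlinarith [abs_nonneg (Real.log (2*c))]

lemma hasDerivAt_Lob {y : ℝ} (hy : y ∈ Ioo 0 π) :
    HasDerivAt Lob (-Real.log (2 * Real.sin y)) y := by
  have hsy : 0 < Real.sin y := Real.sin_pos_of_pos_of_lt_pi hy.1 hy.2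
  have habs : |2 * Real.sin y| = 2 * Real.sin y := abs_of_pos (by linarith)
  have hcont : ContinuousAt (fun t => Real.log |2 * Real.sin t|) y := by
    apply ContinuousAt.comp (Real.continuousAt_log (by rw [habs]; positivity))
    exact ((continuous_const.mul Real.continuous_sin).abs).continuousAt
  have h := integral_hasDerivAt_right (integrable_logsin hy)
      ((Real.measurable_log.comp
        ((measurable_sin.const_mul 2).abs)).stronglyMeasurable.stronglyMeasurableAtFilter)
      hcont
  have h2 := h.neg
  show HasDerivAt (fun x => -∫ t in (0:ℝ)..x, Real.log |2 * Real.sin t|) _ y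
  rw [← habs]
  exact h2

-- algebraic key lemma
lemma key_pos {a b c u v w : ℝ} (ha : a ∈ Ioo 0 π) (hb : b ∈ Ioo 0 π) (hc : c ∈ Ioo 0 π)
    (habc : a + b + c = π) (huvw : u + v + w = 0) (hne : ¬(u = 0 ∧ v = 0)) :
    0 < u^2 * (Real.cos a / Real.sin a) + v^2 * (Real.cos b / Real.sin b)
      + w^2 * (Real.cos c / Real.sin c) := by
  have hsa : 0 < Real.sin a := Real.sin_pos_of_pos_of_lt_pi ha.1 ha.2
  have hsb : 0 < Real.sin b := Real.sin_pos_of_pos_of_lt_pi hb.1 hb.2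
  have hsc : 0 < Real.sin c := Real.sin_pos_of_pos_of_lt_pi hc.1 hc.2
  have hw : w = -(u + v) := by linarith
  -- identities
  have h1 : Real.cos a * Real.sin c + Real.sin a * Real.cos c = Real.sin b := by
    have e : Real.sin (a + c) = Real.sin b := by
      rw [show a + c = π - b by linarith, Real.sin_pi_sub]
    rw [Real.sin_add] at e; linarith
  have h2 : Real.cos b * Real.sin c + Real.sin b * Real.cos c = Real.sin a := by
    have e : Real.sin (b + c) = Real.sin a := by
      rw [show b + c = π - a by linarith, Real.sin_pi_sub]
    rw [Real.sin_add] at e; linarith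
  have hpyth : Real.sin c ^ 2 + Real.cos c ^ 2 = 1 := Real.sin_sq_add_cos_sq c
  set sa := Real.sin a; set sb := Real.sin b; set sc := Real.sin c
  set ca := Real.cos a; set cb := Real.cos b; set cc := Real.cos c
  have key : u^2 * ca * sb * sc + v^2 * sa * cb * sc + w^2 * sa * sb * cc
      = (u * sb + v * sa * cc)^2 + (v * sa * sc)^2 := by
    rw [hw]
    linear_combination (u^2 * sb) * h1 + (v^2 * sa) * h2 - (v^2 * sa^2) * hpyth
  have hEpos : 0 < u^2 * ca * sb * sc + v^2 * sa * cb * sc + w^2 * sa * sb * cc := by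
    rw [key]
    rcases eq_or_ne v 0 with hv0 | hv0
    · have hu : u ≠ 0 := by
        rcases not_and_or.mp hne with h | h
        · exact h
        · exact absurd hv0 h
      have hne2 : u * sb + v * sa * cc ≠ 0 := by
        rw [hv0]; simpa using mul_ne_zero hu hsb.ne'
      linarith [sq_pos_of_ne_zero hne2, sq_nonneg (v * sa * sc)]
    · have hne2 : v * sa * sc ≠ 0 := mul_ne_zero (mul_ne_zero hv0 hsa.ne') hsc.ne'
      linarith [sq_pos_of_ne_zero hne2, sq_nonneg (u * sb + v * sa * cc)]
  have heq : u^2 * (ca / sa) + v^2 * (cb / sb) + w^2 * (cc / sc)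
      = (u^2 * ca * sb * sc + v^2 * sa * cb * sc + w^2 * sa * sb * cc) / (sa * sb * sc) := by
    field_simp
  rw [heq]
  exact div_pos hEpos (by positivity)

lemma hasDerivAt_affine (θ d t : ℝ) : HasDerivAt (fun s => θ + s * d) d t := by
  simpa using ((hasDerivAt_id t).mul_const d).const_add θ

lemma mem_of_seg {θ d t : ℝ} (h0 : θ ∈ Ioo 0 π) (h1 : θ + d ∈ Ioo 0 π) (ht : t ∈ Icc (0:ℝ) 1) :
    θ + t * d ∈ Ioo 0 π := by
  rcases eq_or_lt_of_le ht.1 with h | h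
  · rw [← h]; simpa using h0
  · constructor
    · nlinarith [mul_nonneg (sub_nonneg.2 ht.2) h0.1.le, mul_pos h h1.1]
    · nlinarith [mul_lt_mul_of_pos_left h1.2 h,
        mul_le_mul_of_nonneg_left h0.2.le (sub_nonneg.2 ht.2)]

lemma hasDerivAt_logsin {y : ℝ} (hy : y ∈ Ioo 0 π) :
    HasDerivAt (fun y => Real.log (2 * Real.sin y)) (Real.cos y / Real.sin y) y := by
  have hs : 0 < Real.sin y := Real.sin_pos_of_pos_of_lt_pi hy.1 hy.2
  have h := ((Real.hasDerivAt_sin y).const_mul 2).log (by positivity)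
  convert h using 1
  rw [mul_div_mul_left _ _ (by norm_num : (2:ℝ) ≠ 0)]

lemma seg_sc {α β γ u v w : ℝ}
    (hA : α ∈ Ioo 0 π) (hB : β ∈ Ioo 0 π) (hC : γ ∈ Ioo 0 π)
    (hA' : α + u ∈ Ioo 0 π) (hB' : β + v ∈ Ioo 0 π) (hC' : γ + w ∈ Ioo 0 π)
    (hsum : α + β + γ = π) (hcsum : u + v + w = 0) (hne : ¬(u = 0 ∧ v = 0)) :
    StrictConcaveOn ℝ (Icc (0:ℝ) 1)
      (fun t => Lob (α + t * u) + Lob (β + t * v) + Lob (γ + t * w)) := by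
  set g1 : ℝ → ℝ := fun t => -Real.log (2 * Real.sin (α + t * u)) * u
      + -Real.log (2 * Real.sin (β + t * v)) * v
      + -Real.log (2 * Real.sin (γ + t * w)) * w with hg1def
  have hg : ∀ t ∈ Icc (0:ℝ) 1,
      HasDerivAt (fun t => Lob (α + t * u) + Lob (β + t * v) + Lob (γ + t * w)) (g1 t) t := by
    intro t ht
    exact (((hasDerivAt_Lob (mem_of_seg hA hA' ht)).comp t (hasDerivAt_affine α u t)).add
      ((hasDerivAt_Lob (mem_of_seg hB hB' ht)).comp t (hasDerivAt_affine β v t))).add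
      ((hasDerivAt_Lob (mem_of_seg hC hC' ht)).comp t (hasDerivAt_affine γ w t))
  apply strictConcaveOn_of_deriv2_neg (convex_Icc 0 1)
    (fun t ht => (hg t ht).continuousAt.continuousWithinAt)
  intro t ht
  rw [interior_Icc] at ht
  have hmA := mem_of_seg hA hA' (Ioo_subset_Icc_self ht)
  have hmB := mem_of_seg hB hB' (Ioo_subset_Icc_self ht)
  have hmC := mem_of_seg hC hC' (Ioo_subset_Icc_self ht)
  have hg1 : HasDerivAt g1
      (-(u^2 * (Real.cos (α + t*u) / Real.sin (α + t*u))
        + v^2 * (Real.cos (β + t*v) / Real.sin (β + t*v))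
        + w^2 * (Real.cos (γ + t*w) / Real.sin (γ + t*w)))) t := by
    have d1 := (((hasDerivAt_logsin hmA).comp t (hasDerivAt_affine α u t)).neg).mul_const u
    have d2 := (((hasDerivAt_logsin hmB).comp t (hasDerivAt_affine β v t)).neg).mul_const v
    have d3 := (((hasDerivAt_logsin hmC).comp t (hasDerivAt_affine γ w t)).neg).mul_const w
    exact ((d1.add d2).add d3).congr_deriv (by ring)
  have hkey := key_pos hmA hmB hmC (by linear_combination hsum + t * hcsum)
    (by linarith) hne
  have hev : deriv (fun t => Lob (α + t * u) + Lob (β + t * v) + Lob (γ + t * w))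
      =ᶠ[nhds t] g1 := by
    filter_upwards [isOpen_Ioo.mem_nhds ht] with s hs
    exact (hg s (Ioo_subset_Icc_self hs)).deriv
  have h2 : deriv^[2] (fun t => Lob (α + t * u) + Lob (β + t * v) + Lob (γ + t * w)) t
      = deriv g1 t := by
    rw [show (deriv^[2] (fun t => Lob (α + t * u) + Lob (β + t * v) + Lob (γ + t * w)))
        = deriv (deriv (fun t => Lob (α + t * u) + Lob (β + t * v) + Lob (γ + t * w))) from rfl]
    exact hev.deriv_eq
  rw [h2, hg1.deriv]
  linarith

lemma convex_comb_pos {a b x y : ℝ} (ha : 0 ≤ a) (hb : 0 ≤ b) (hab : a + b = 1)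
    (hx : 0 < x) (hy : 0 < y) : 0 < a * x + b * y := by
  rcases eq_or_lt_of_le ha with h | h
  · rw [← h] at hab ⊢; simpa using by nlinarith
  · nlinarith [mul_nonneg hb hy.le]

/-- `V(α,β,γ) = Л(α) + Л(β) + Л(γ)` is strictly concave on the set of positive
angle triples summing to `π`. -/
theorem Lob_sum_strictConcaveOn :
    StrictConcaveOn ℝ
      {p : ℝ × ℝ × ℝ | 0 < p.1 ∧ 0 < p.2.1 ∧ 0 < p.2.2 ∧ p.1 + p.2.1 + p.2.2 = π}
      (fun p => Lob p.1 + Lob p.2.1 + Lob p.2.2) := by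
  constructor
  · intro p hp q hq a b ha hb hab
    obtain ⟨hp1, hp2, hp3, hps⟩ := hp
    obtain ⟨hq1, hq2, hq3, hqs⟩ := hq
    refine ⟨?_, ?_, ?_, ?_⟩ <;>
      simp only [Set.mem_setOf_eq, Prod.fst_add, Prod.snd_add, Prod.smul_fst, Prod.smul_snd,
        smul_eq_mul]
    · exact convex_comb_pos ha hb hab hp1 hq1
    · exact convex_comb_pos ha hb hab hp2 hq2
    · exact convex_comb_pos ha hb hab hp3 hq3
    · nlinarith
  · intro p hp q hq hpq a b ha hb hab
    obtain ⟨hp1, hp2, hp3, hps⟩ := hp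
    obtain ⟨hq1, hq2, hq3, hqs⟩ := hq
    set u := q.1 - p.1 with hu
    set v := q.2.1 - p.2.1 with hv
    set w := q.2.2 - p.2.2 with hw
    have hA : p.1 ∈ Ioo 0 π := ⟨hp1, by linarith⟩
    have hB : p.2.1 ∈ Ioo 0 π := ⟨hp2, by linarith⟩
    have hC : p.2.2 ∈ Ioo 0 π := ⟨hp3, by linarith⟩
    have hA' : p.1 + u ∈ Ioo 0 π := by
      rw [hu]; constructor
      · linarith
      · linarith
    have hB' : p.2.1 + v ∈ Ioo 0 π := by
      rw [hv]; constructor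
      · linarith
      · linarith
    have hC' : p.2.2 + w ∈ Ioo 0 π := by
      rw [hw]; constructor
      · linarith
      · linarith
    have hcsum : u + v + w = 0 := by rw [hu, hv, hw]; linarith
    have hne : ¬(u = 0 ∧ v = 0) := by
      rintro ⟨h1, h2⟩
      apply hpq
      have e1 : p.1 = q.1 := by rw [hu] at h1; linarith
      have e2 : p.2.1 = q.2.1 := by rw [hv] at h2; linarith
      have e3 : p.2.2 = q.2.2 := by
        have : w = 0 := by linarith
        rw [hw] at this; linarith
      exact Prod.ext e1 (Prod.ext e2 e3)
    have SC := seg_sc hA hB hC hA' hB' hC' hps hcsum hne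
    have key := SC.2 (x := 0) (y := 1) ⟨le_refl 0, zero_le_one⟩ ⟨zero_le_one, le_refl 1⟩
      (by norm_num) ha hb hab
    have ea : a = 1 - b := by linarith
    simp only [smul_eq_mul, mul_zero, mul_one, zero_add, mul_zero, add_zero, zero_mul,
      one_mul] at key
    have e1 : (a • p + b • q).1 = p.1 + b * u := by
      simp only [Prod.fst_add, Prod.smul_fst, smul_eq_mul, hu, ea]; ring
    have e2 : (a • p + b • q).2.1 = p.2.1 + b * v := by
      simp only [Prod.snd_add, Prod.smul_snd, Prod.fst_add, Prod.smul_fst, smul_eq_mul, hv, ea]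
      ring
    have e3 : (a • p + b • q).2.2 = p.2.2 + b * w := by
      simp only [Prod.snd_add, Prod.smul_snd, smul_eq_mul, hw, ea]; ring
    simp only [smul_eq_mul, e1, e2, e3]
    convert key using 2 <;> rw [hu] <;> ring
    all_goals simp only [hv, hw, add_sub_cancel]
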